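/- arXiv:1908.04642 — 2 statements merged into one kernel-verified Lean document; each statement's English description precedes it below -/
import Mathlib

section
/- Let (X, R, C, F) be a CRS with food set whose semigroup (S_F, ∘) is nilpotent. Then for every initial condition Y_0 ⊆ X_F, the discrete dynamics (Y_n) stabilizes at ∅: there exists N ∈ ℕ such that Y_n = ∅ for all n ≥ N. -/
open Set

universe u

/-- Domain of a reaction: chemicals consumed. -/
def rDom {X : Type u} (r : X → ℤ) : Set X := {x | r x < 0}

/-- Range of a reaction: chemicals produced. -/
def rRan {X : Type u} (r : X → ℤ) : Set X := {x | 0 < r x}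

/-- Function of a reaction: `φ_r(Y) = ran(r)` if `dom(r) ⊆ Y`, else `∅`. -/
def phiRxn {X : Type u} (r : X → ℤ) : Set X → Set X :=
  fun Y => {x | rDom r ⊆ Y ∧ x ∈ rRan r}

/-- Sum of two maps on the power set: `(φ + ψ)(Y) = φ(Y) ∪ ψ(Y)`. -/
def mapAdd {X : Type u} (φ ψ : Set X → Set X) : Set X → Set X := fun Y => φ Y ∪ ψ Y

/-- The zero map `Y ↦ ∅`. -/
def mapZero {X : Type u} : Set X → Set X := fun _ => (∅ : Set X)

/-- Partial order: `φ ≤ ψ` iff `φ(Y) ⊆ ψ(Y)` for all `Y`. -/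
def mapLE {X : Type u} (φ ψ : Set X → Set X) : Prop := ∀ Y : Set X, φ Y ⊆ ψ Y

/-- Monotone map on the power set. -/
def MonotoneMap {X : Type u} (φ : Set X → Set X) : Prop :=
  ∀ ⦃Z Y : Set X⦄, Z ⊆ Y → φ Z ⊆ φ Y

/-- A chemical reaction system on the set of chemicals `X`: a finite set of reactions
`R` and a set `C ⊆ X × R` of catalyzed reactions. -/
structure CRS (X : Type u) where
  R : Set (X → ℤ)
  hR : R.Finite
  C : Set (X × (X → ℤ))
  hC : ∀ p ∈ C, p.2 ∈ R

/-- Function of a chemical: `φ_x = Σ_{(x,r) ∈ C} φ_r`. -/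
def phiChem {X : Type u} (𝒞 : CRS X) (x : X) : Set X → Set X :=
  fun Y => {y | ∃ r, (x, r) ∈ 𝒞.C ∧ y ∈ phiRxn r Y}

/-- The smallest set of maps containing the generators `G` and the zero map and
closed under composition and sum. -/
inductive InClosure {X : Type u} (G : Set (Set X → Set X)) : (Set X → Set X) → Prop
  | gen {φ} : φ ∈ G → InClosure G φ
  | zero : InClosure G mapZero
  | comp {φ ψ} : InClosure G φ → InClosure G ψ → InClosure G (φ ∘ ψ)
  | add {φ ψ} : InClosure G φ → InClosure G ψ → InClosure G (mapAdd φ ψ)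

/-- The semigroup model `S(Y)` generated by the functions of the chemicals of `Y`.
The full semigroup model `S` is `SgModel 𝒞 Set.univ`. -/
def SgModel {X : Type u} (𝒞 : CRS X) (Y : Set X) : Set (Set X → Set X) :=
  {φ | InClosure {ψ | ∃ x ∈ Y, ψ = phiChem 𝒞 x} φ}

/-- The function `Φ_Y` of a subset `Y`, the sum (pointwise union) of all elements
of `S(Y)`. -/
def PhiSub {X : Type u} (𝒞 : CRS X) (Y : Set X) : Set X → Set X :=
  fun W => {y | ∃ φ ∈ SgModel 𝒞 Y, y ∈ φ W}

/-- The closure `F̄` of a food set: the smallest set containing `F` such that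
`ran(r) ⊆ F̄` for every reaction `r ∈ R` with `dom(r) ⊆ F` catalyzed by some
chemical of `F`. -/
def foodClosure {X : Type u} (𝒞 : CRS X) (F : Set X) : Set X :=
  ⋂₀ {G | F ⊆ G ∧ ∀ r ∈ 𝒞.R, rDom r ⊆ F → (∃ x ∈ F, (x, r) ∈ 𝒞.C) → rRan r ⊆ G}

/-- `X_F = X \ F̄`. -/
def XF {X : Type u} (𝒞 : CRS X) (F : Set X) : Set X := (foodClosure 𝒞 F)ᶜ

/-- The `F`-modification of a map:
`φ_F(Z) = (φ(Z ∪ F̄) ∪ Φ_{F̄}(Z ∪ F̄)) ∩ X_F`. -/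
def Fmod {X : Type u} (𝒞 : CRS X) (F : Set X) (φ : Set X → Set X) : Set X → Set X :=
  fun Z =>
    (φ (Z ∪ foodClosure 𝒞 F) ∪ PhiSub 𝒞 (foodClosure 𝒞 F) (Z ∪ foodClosure 𝒞 F)) ∩ XF 𝒞 F

/-- `S_F(Y)`: the smallest set of maps containing `{(φ_x)_F : x ∈ Y}` and the zero map,
closed under composition and sum. -/
def SgModelF {X : Type u} (𝒞 : CRS X) (F : Set X) (Y : Set X) : Set (Set X → Set X) :=
  {φ | InClosure {ψ | ∃ x ∈ Y, ψ = Fmod 𝒞 F (phiChem 𝒞 x)} φ}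

/-- The function `Φ_Y` of `Y ⊆ X_F` in the semigroup model with food set. -/
def PhiSubF {X : Type u} (𝒞 : CRS X) (F : Set X) (Y : Set X) : Set X → Set X :=
  fun W => {y | ∃ φ ∈ SgModelF 𝒞 F Y, y ∈ φ W}

/-- The semigroup model with food set `S_F`, generated by the `F`-modifications of all
elements of `S`. -/
def SgF {X : Type u} (𝒞 : CRS X) (F : Set X) : Set (Set X → Set X) :=
  {φ | InClosure {ψ | ∃ φ' ∈ SgModel 𝒞 Set.univ, ψ = Fmod 𝒞 F φ'} φ}

/-- The discrete dynamics: `Y_{n+1} = Φ_{Y_n}(Y_n)`. -/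
def dyn {X : Type u} (𝒞 : CRS X) (F : Set X) (Y0 : Set X) : ℕ → Set X
  | 0 => Y0
  | n + 1 => PhiSubF 𝒞 F (dyn 𝒞 F Y0 n) (dyn 𝒞 F Y0 n)

/-- `(S_F, ∘)` is nilpotent: some `N` such that every composition of `N` elements of
`S_F` is the zero map. -/
def NilpotentF {X : Type u} (𝒞 : CRS X) (F : Set X) : Prop :=
  ∃ N : ℕ, ∀ l : List (Set X → Set X),
    l.length = N → (∀ φ ∈ l, φ ∈ SgF 𝒞 F) → l.foldr (· ∘ ·) id = mapZero

/-- `x` is generated from `W` (conditions (F1) and (F2)); if `withCat = true`, in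
addition every reaction used is catalyzed by some chemical. -/
def GenFrom {X : Type u} (𝒞 : CRS X) (W : Set X) (withCat : Bool) (x : X) : Prop :=
  ∃ (J : Finset ℕ) (ri : ℕ → X → ℤ) (μ : ℕ → ℕ) (n : ℕ) (P : ℕ → Finset ℕ),
    (∀ i ∈ J, ri i ∈ 𝒞.R) ∧
    (∀ i ∈ J, 0 < μ i) ∧
    x ∈ rRan (fun y => ∑ i ∈ J, (μ i : ℤ) * ri i y) ∧
    rDom (fun y => ∑ i ∈ J, (μ i : ℤ) * ri i y) ⊆ W ∧
    0 < n ∧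
    (∀ j k, j < n → k < n → j ≠ k → Disjoint (P j) (P k)) ∧
    J = (Finset.range n).biUnion P ∧
    rDom (fun y => ∑ i ∈ P 0, (μ i : ℤ) * ri i y) ⊆ W ∧
    (∀ j, j + 1 < n →
      rDom (fun y => ∑ i ∈ P (j + 1), (μ i : ℤ) * ri i y) ⊆
        {y | ∃ k ≤ j, y ∈ rRan (fun z => ∑ i ∈ P k, (μ i : ℤ) * ri i z)}) ∧
    (withCat = true → ∀ i ∈ J, ∃ c : X, (c, ri i) ∈ 𝒞.C)

/-- A CRS with food set `F` is RAF: `(X,R,C)` is generated from `F̄`, and every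
`x ∈ X_F` is generated from `F̄` using only catalyzed reactions. -/
def IsRAF {X : Type u} (𝒞 : CRS X) (F : Set X) : Prop :=
  (∀ x : X, GenFrom 𝒞 (foodClosure 𝒞 F) false x) ∧
  (∀ x ∈ XF 𝒞 F, GenFrom 𝒞 (foodClosure 𝒞 F) true x)

/-- Restriction of a reaction to a subset of chemicals. -/
def restRxn {X : Type u} (X' : Set X) (r : X → ℤ) : X' → ℤ := fun y => r y

/-- `R|_{X'}`. -/
def restR {X : Type u} (𝒞 : CRS X) (X' : Set X) : Set (X' → ℤ) :=
  {r' | ∃ r ∈ 𝒞.R, rDom r ⊆ X' ∧ (rRan r ∩ X').Nonempty ∧ r' = restRxn X' r}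

/-- `C|_{X'}`. -/
def restC {X : Type u} (𝒞 : CRS X) (X' : Set X) : Set (X' × (X' → ℤ)) :=
  {p | ∃ r, ((p.1 : X), r) ∈ 𝒞.C ∧ restRxn X' r ∈ restR 𝒞 X' ∧ p.2 = restRxn X' r}

/-- The subnetwork `(X', R|_{X'}, C|_{X'})`. -/
def restCRS {X : Type u} (𝒞 : CRS X) (X' : Set X) : CRS X' where
  R := restR 𝒞 X'
  hR := (𝒞.hR.image (restRxn X')).subset (by
    rintro r' ⟨r, hr, -, -, rfl⟩
    exact ⟨r, hr, rfl⟩)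
  C := restC 𝒞 X'
  hC := by
    rintro p ⟨r, -, hmem, hp⟩
    rw [hp]
    exact hmem

/-- `X' ⊆ X` is a RAF subset of `(X,R,C,F)`. -/
def IsRAFSubset {X : Type u} (𝒞 : CRS X) (F : Set X) (X' : Set X) : Prop :=
  IsRAF (restCRS 𝒞 X') {y : X' | (y : X) ∈ F} ∧
  foodClosure 𝒞 F ⊆ X' ∧
  (∀ r ∈ 𝒞.R, rDom r ⊆ X' → (rRan r ∩ X').Nonempty → rRan r ⊆ X')

section Aux

variable {X : Type u}

lemma inClosure_mono_gens {G G' : Set (Set X → Set X)} (hGG : G ⊆ G')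
    {φ} (h : InClosure G φ) : InClosure G' φ := by
  induction h with
  | gen h => exact .gen (hGG h)
  | zero => exact .zero
  | comp _ _ ih1 ih2 => exact .comp ih1 ih2
  | add _ _ ih1 ih2 => exact .add ih1 ih2

lemma inClosure_monotone {G : Set (Set X → Set X)}
    (hG : ∀ φ ∈ G, MonotoneMap φ) {φ} (h : InClosure G φ) : MonotoneMap φ := by
  induction h with
  | gen h => exact hG _ h
  | zero => intro _ _ _; exact Set.Subset.rfl
  | comp _ _ ih1 ih2 => intro Z Y hZY; exact ih1 (ih2 hZY)
  | add _ _ ih1 ih2 => intro Z Y hZY; exact Set.union_subset_union (ih1 hZY) (ih2 hZY)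

lemma phiChem_monotone (𝒞 : CRS X) (x : X) : MonotoneMap (phiChem 𝒞 x) := by
  rintro Z Y hZY y ⟨r, hr, hdom, hran⟩
  exact ⟨r, hr, hdom.trans hZY, hran⟩

lemma sgModel_monotone (𝒞 : CRS X) (Y : Set X) {φ} (h : φ ∈ SgModel 𝒞 Y) :
    MonotoneMap φ :=
  inClosure_monotone (by rintro ψ ⟨x, -, rfl⟩; exact phiChem_monotone 𝒞 x) h

lemma phiSub_monotone (𝒞 : CRS X) (Y : Set X) : MonotoneMap (PhiSub 𝒞 Y) := by
  rintro Z W hZW y ⟨φ, hφ, hy⟩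
  exact ⟨φ, hφ, sgModel_monotone 𝒞 Y hφ hZW hy⟩

lemma fmod_monotone (𝒞 : CRS X) (F : Set X) {φ} (hφ : MonotoneMap φ) :
    MonotoneMap (Fmod 𝒞 F φ) := by
  intro Z Y hZY
  refine Set.inter_subset_inter ?_ Set.Subset.rfl
  exact Set.union_subset_union
    (hφ (Set.union_subset_union_left _ hZY))
    (phiSub_monotone 𝒞 (foodClosure 𝒞 F) (Set.union_subset_union_left _ hZY))

lemma sgF_monotone (𝒞 : CRS X) (F : Set X) {φ} (h : φ ∈ SgF 𝒞 F) : MonotoneMap φ :=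
  inClosure_monotone
    (by rintro ψ ⟨φ', hφ', rfl⟩; exact fmod_monotone 𝒞 F (sgModel_monotone 𝒞 _ hφ')) h

lemma sgModelF_subset_sgF (𝒞 : CRS X) (F : Set X) (Y : Set X) :
    SgModelF 𝒞 F Y ⊆ SgF 𝒞 F := fun _ h =>
  inClosure_mono_gens
    (by rintro ψ ⟨x, hx, rfl⟩
        exact ⟨phiChem 𝒞 x, InClosure.gen ⟨x, Set.mem_univ x, rfl⟩, rfl⟩) h

lemma exists_dominating_finset (𝒞 : CRS X) (F : Set X)
    (s : Finset (Set X → Set X)) (hsub : ∀ φ ∈ s, φ ∈ SgF 𝒞 F) :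
    ∃ Ψ ∈ SgF 𝒞 F, ∀ φ ∈ s, mapLE φ Ψ := by
  classical
  induction s using Finset.induction_on with
  | empty => exact ⟨mapZero, InClosure.zero, by simp⟩
  | @insert a s ha ih =>
    obtain ⟨Ψ, hΨ, hle⟩ := ih (fun φ hφ => hsub φ (Finset.mem_insert_of_mem hφ))
    refine ⟨mapAdd a Ψ, InClosure.add (hsub a (Finset.mem_insert_self a s)) hΨ, ?_⟩
    intro φ hφ W
    rcases Finset.mem_insert.mp hφ with rfl | hφ
    · exact Set.subset_union_left
    · exact (hle φ hφ W).trans Set.subset_union_right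

lemma exists_dominating [Finite X] (𝒞 : CRS X) (F : Set X) (Yn : Set X) :
    ∃ Ψ ∈ SgF 𝒞 F, ∀ W, PhiSubF 𝒞 F Yn W ⊆ Ψ W := by
  classical
  have hfin : (SgModelF 𝒞 F Yn).Finite := Set.toFinite _
  obtain ⟨Ψ, hΨ, hle⟩ := exists_dominating_finset 𝒞 F hfin.toFinset
    (fun φ hφ => sgModelF_subset_sgF 𝒞 F Yn (hfin.mem_toFinset.mp hφ))
  refine ⟨Ψ, hΨ, fun W y ⟨φ, hφ, hy⟩ => hle φ (hfin.mem_toFinset.mpr hφ) W hy⟩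

lemma foldr_comp_eq {α : Type*} (l : List (α → α)) (b : α → α) :
    l.foldr (· ∘ ·) b = l.foldr (· ∘ ·) id ∘ b := by
  induction l with
  | nil => rfl
  | cons a l ih => simp only [List.foldr_cons, ih]; rfl

end Aux

/-- if `(S_F, ∘)` is nilpotent, the discrete dynamics stabilizes at `∅`
for every initial condition `Y₀ ⊆ X_F`. -/
theorem nilpotent_dynamics_to_empty {X : Type u} [Finite X] (𝒞 : CRS X) (F : Set X)
    (h : NilpotentF 𝒞 F) (Y0 : Set X) (hY0 : Y0 ⊆ XF 𝒞 F) :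
    ∃ N : ℕ, ∀ n ≥ N, dyn 𝒞 F Y0 n = ∅ := by
  classical
  obtain ⟨N, hN⟩ := h
  have key : ∀ n, ∃ l : List (Set X → Set X), l.length = n + 1 ∧
      (∀ φ ∈ l, φ ∈ SgF 𝒞 F) ∧ dyn 𝒞 F Y0 (n+1) ⊆ (l.foldr (· ∘ ·) id) Y0 := by
    intro n
    induction n with
    | zero =>
      obtain ⟨Ψ, hΨ, hle⟩ := exists_dominating 𝒞 F (dyn 𝒞 F Y0 0)
      refine ⟨[Ψ], rfl, by simpa using hΨ, ?_⟩
      exact hle Y0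
    | succ n ih =>
      obtain ⟨l, hlen, hmem, hsub⟩ := ih
      obtain ⟨Ψ, hΨ, hle⟩ := exists_dominating 𝒞 F (dyn 𝒞 F Y0 (n+1))
      refine ⟨Ψ :: l, by simp [hlen], ?_, ?_⟩
      · intro φ hφ
        rcases List.mem_cons.mp hφ with rfl | hφ
        · exact hΨ
        · exact hmem φ hφ
      · have h1 : dyn 𝒞 F Y0 (n+2) ⊆ Ψ (dyn 𝒞 F Y0 (n+1)) := hle _
        have h2 : Ψ (dyn 𝒞 F Y0 (n+1)) ⊆ Ψ ((l.foldr (· ∘ ·) id) Y0) :=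
          sgF_monotone 𝒞 F hΨ hsub
        exact h1.trans h2
  refine ⟨N + 1, fun n hn => ?_⟩
  obtain ⟨m, rfl⟩ : ∃ m, n = m + 1 := ⟨n - 1, by omega⟩
  obtain ⟨l, hlen, hmem, hsub⟩ := key m
  have hlenN : (l.take N).length = N := by
    rw [List.length_take, hlen]; omega
  have hzero : (l.take N).foldr (· ∘ ·) id = mapZero :=
    hN _ hlenN (fun φ hφ => hmem φ (List.mem_of_mem_take hφ))
  have hfold : l.foldr (· ∘ ·) id =
      ((l.take N).foldr (· ∘ ·) id) ∘ ((l.drop N).foldr (· ∘ ·) id) := by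
    conv_lhs => rw [← List.take_append_drop N l]
    rw [List.foldr_append, foldr_comp_eq]
  have : dyn 𝒞 F Y0 (m+1) ⊆ (∅ : Set X) := by
    refine hsub.trans ?_
    rw [hfold, hzero]
    exact Set.Subset.rfl
  exact Set.subset_empty_iff.mp this
end

section
/- Let (X, R, C, F) be a CRS with food set and (Y_n) its discrete dynamics. If Y_1 ⊆ Y_0, then Y_{n+1} ⊆ Y_n for all n ∈ ℕ. -/
open Set

universe u

lemma phiChem_mono {X : Type u} (𝒞 : CRS X) (x : X) : MonotoneMap (phiChem 𝒞 x) := by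
  intro Z Y hZY y ⟨r, hr, hdom, hran⟩
  exact ⟨r, hr, hdom.trans hZY, hran⟩

lemma InClosure_mono {X : Type u} {G : Set (Set X → Set X)}
    (hG : ∀ φ ∈ G, MonotoneMap φ) {φ} (h : InClosure G φ) : MonotoneMap φ := by
  induction h with
  | gen hg => exact hG _ hg
  | zero => intro _ _ _ y hy; exact hy
  | comp _ _ ih1 ih2 => intro Z Y hZY; exact ih1 (ih2 hZY)
  | add _ _ ih1 ih2 =>
      intro Z Y hZY y hy
      rcases hy with hy | hy
      · exact Or.inl (ih1 hZY hy)
      · exact Or.inr (ih2 hZY hy)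

lemma SgModel_mono {X : Type u} (𝒞 : CRS X) (Y : Set X) {φ} (h : φ ∈ SgModel 𝒞 Y) :
    MonotoneMap φ := by
  refine InClosure_mono ?_ h
  rintro ψ ⟨x, -, rfl⟩
  exact phiChem_mono 𝒞 x

lemma PhiSub_mono {X : Type u} (𝒞 : CRS X) (Y : Set X) : MonotoneMap (PhiSub 𝒞 Y) := by
  intro Z W hZW y ⟨φ, hφ, hy⟩
  exact ⟨φ, hφ, SgModel_mono 𝒞 Y hφ hZW hy⟩

lemma Fmod_mono {X : Type u} (𝒞 : CRS X) (F : Set X) {φ} (hφ : MonotoneMap φ) :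
    MonotoneMap (Fmod 𝒞 F φ) := by
  intro Z W hZW y ⟨hy, hyX⟩
  refine ⟨?_, hyX⟩
  have hun : Z ∪ foodClosure 𝒞 F ⊆ W ∪ foodClosure 𝒞 F := Set.union_subset_union_left _ hZW
  rcases hy with hy | hy
  · exact Or.inl (hφ hun hy)
  · exact Or.inr (PhiSub_mono 𝒞 _ hun hy)

lemma SgModelF_mono_mem {X : Type u} (𝒞 : CRS X) (F Y : Set X) {φ}
    (h : φ ∈ SgModelF 𝒞 F Y) : MonotoneMap φ := by
  refine InClosure_mono ?_ h
  rintro ψ ⟨x, -, rfl⟩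
  exact Fmod_mono 𝒞 F (phiChem_mono 𝒞 x)

lemma InClosure_subset {X : Type u} {G G' : Set (Set X → Set X)} (hGG : G ⊆ G')
    {φ} (h : InClosure G φ) : InClosure G' φ := by
  induction h with
  | gen hg => exact .gen (hGG hg)
  | zero => exact .zero
  | comp _ _ ih1 ih2 => exact .comp ih1 ih2
  | add _ _ ih1 ih2 => exact .add ih1 ih2

lemma PhiSubF_mono {X : Type u} (𝒞 : CRS X) (F : Set X) {Y Y' W W' : Set X}
    (hY : Y ⊆ Y') (hW : W ⊆ W') : PhiSubF 𝒞 F Y W ⊆ PhiSubF 𝒞 F Y' W' := by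
  rintro y ⟨φ, hφ, hy⟩
  have hφ' : φ ∈ SgModelF 𝒞 F Y' := by
    refine InClosure_subset ?_ hφ
    rintro ψ ⟨x, hx, rfl⟩
    exact ⟨x, hY hx, rfl⟩
  exact ⟨φ, hφ', SgModelF_mono_mem 𝒞 F Y hφ hW hy⟩

/-- if `Y₁ ⊆ Y₀` then `Y_{n+1} ⊆ Y_n` for all `n`. -/
theorem dynamics_descending {X : Type u} [Finite X] (𝒞 : CRS X) (F : Set X)
    (Y0 : Set X) (hY0 : Y0 ⊆ XF 𝒞 F) (h1 : dyn 𝒞 F Y0 1 ⊆ dyn 𝒞 F Y0 0) :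
    ∀ n : ℕ, dyn 𝒞 F Y0 (n + 1) ⊆ dyn 𝒞 F Y0 n := by
  intro n
  induction n with
  | zero => exact h1
  | succ k ih => exact PhiSubF_mono 𝒞 F ih ih
end
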